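/- Let τ ∈ (0,1], λ > 0 and C > 0. Let (a_k)_{k≥1} be a sequence of reals with 1/(1 + e^C) ≤ a_k ≤ 1/(1 + e^{−C}) for all k, and let (m_k)_{k≥0} be a sequence with m_k ∈ [0,1] for all k, m₀ ∈ [τ, 1 − τ], and m_k = m_{k−1} − τ λ a_k m_k (1 − m_k) for all k ≥ 1. Define u_k := a_k (1 − m_k) and ρ_k := u_k + m_k. Then for every k ≥ 1: (i) τ/(1 + τλ)^k ≤ m_k ≤ 1 − τ; (ii) τ/(1 + e^C) ≤ u_k ≤ 1 − τ/(1 + τλ)^k; (iii) τ/(1 + e^C) + τ/(1 + τλ)^k ≤ ρ_k ≤ 1 − τ(1 − 1/(1 + e^{−C})). In particular 0 < u_k < 1, 0 < m_k < 1 and 0 < ρ_k < 1 for all k ≥ 1. -/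
import Mathlib


/-- Strict uniform box constraints for the implicit Euler iterates
(Theorem 2.5 of the paper), in sequence form. -/
theorem discrete_box_constraints (τ lam C : ℝ)
    (hτ0 : 0 < τ) (hτ1 : τ ≤ 1) (hlam : 0 < lam) (hC : 0 < C)
    (a m : ℕ → ℝ)
    (ha : ∀ k ≥ 1, 1 / (1 + Real.exp C) ≤ a k ∧ a k ≤ 1 / (1 + Real.exp (-C)))
    (hm : ∀ k, m k ∈ Set.Icc (0 : ℝ) 1)
    (hm0 : m 0 ∈ Set.Icc τ (1 - τ))
    (hrec : ∀ k ≥ 1, m k = m (k - 1) - τ * lam * a k * m k * (1 - m k)) :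
    ∀ k ≥ 1,
      (τ / (1 + τ * lam) ^ k ≤ m k ∧ m k ≤ 1 - τ) ∧
      (τ / (1 + Real.exp C) ≤ a k * (1 - m k) ∧
        a k * (1 - m k) ≤ 1 - τ / (1 + τ * lam) ^ k) ∧
      (τ / (1 + Real.exp C) + τ / (1 + τ * lam) ^ k ≤ a k * (1 - m k) + m k ∧
        a k * (1 - m k) + m k ≤ 1 - τ * (1 - 1 / (1 + Real.exp (-C)))) ∧
      (0 < a k * (1 - m k) ∧ a k * (1 - m k) < 1) ∧
      (0 < m k ∧ m k < 1) ∧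
      (0 < a k * (1 - m k) + m k ∧ a k * (1 - m k) + m k < 1) := by
  have hP : (0:ℝ) < 1 + τ * lam := by nlinarith
  have hPk : ∀ k : ℕ, (0:ℝ) < (1 + τ * lam) ^ k := fun k => pow_pos hP k
  have heC : (0:ℝ) < Real.exp C := Real.exp_pos _
  have heC' : (0:ℝ) < Real.exp (-C) := Real.exp_pos _
  have hA1 : 1 / (1 + Real.exp (-C)) < 1 := by
    rw [div_lt_one (by linarith)]; linarith
  have ha1 : ∀ k ≥ 1, 0 < a k ∧ a k ≤ 1 := by
    intro k hk
    obtain ⟨h1, h2⟩ := ha k hk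
    constructor
    · have : (0:ℝ) < 1 / (1 + Real.exp C) := by positivity
      linarith
    · linarith
  -- key induction: box for m
  have key : ∀ k : ℕ, τ / (1 + τ * lam) ^ k ≤ m k ∧ m k ≤ 1 - τ := by
    intro k
    induction k with
    | zero => simpa using hm0
    | succ n ih =>
      have hrecn := hrec (n + 1) (Nat.le_add_left 1 n)
      simp only [Nat.add_sub_cancel] at hrecn
      obtain ⟨hmn0, hmn1⟩ := hm (n + 1)
      obtain ⟨hak0, hak1⟩ := ha1 (n + 1) (Nat.le_add_left 1 n)
      have hc : 0 ≤ τ * lam * a (n + 1) * m (n + 1) * (1 - m (n + 1)) := by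
        have := mul_nonneg (mul_nonneg (mul_nonneg
          (mul_nonneg hτ0.le hlam.le) hak0.le) hmn0) (by linarith : (0:ℝ) ≤ 1 - m (n+1))
        exact this
      constructor
      · -- lower bound
        have h1 : m n ≤ m (n + 1) * (1 + τ * lam) := by
          have haux : a (n + 1) * (1 - m (n + 1)) ≤ 1 := by
            nlinarith
          nlinarith [mul_nonneg (mul_nonneg hτ0.le hlam.le) hmn0]
        have h2 : τ / (1 + τ * lam) ^ n ≤ m (n + 1) * (1 + τ * lam) :=
          le_trans ih.1 h1
        rw [div_le_iff₀ (hPk n)] at h2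
        rw [pow_succ, div_le_iff₀ (by positivity)]
        calc τ ≤ m (n + 1) * (1 + τ * lam) * (1 + τ * lam) ^ n := h2
          _ = m (n + 1) * ((1 + τ * lam) ^ n * (1 + τ * lam)) := by ring
      · linarith [ih.2]
  intro k hk
  obtain ⟨hml, hmu⟩ := key k
  obtain ⟨haL, haU⟩ := ha k hk
  obtain ⟨hak0, hak1⟩ := ha1 k hk
  obtain ⟨hmk0, hmk1⟩ := hm k
  have hτk : 0 < τ / (1 + τ * lam) ^ k := div_pos hτ0 (hPk k)
  have huL : τ / (1 + Real.exp C) ≤ a k * (1 - m k) := by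
    rw [div_le_iff₀ (by linarith : (0:ℝ) < 1 + Real.exp C)] at haL ⊢
    nlinarith
  have huU : a k * (1 - m k) ≤ 1 - τ / (1 + τ * lam) ^ k := by
    nlinarith
  have hρU : a k * (1 - m k) + m k ≤ 1 - τ * (1 - 1 / (1 + Real.exp (-C))) := by
    nlinarith [mul_nonneg (by linarith : (0:ℝ) ≤ 1 - a k) (by linarith : (0:ℝ) ≤ 1 - τ - m k)]
  have hτC : 0 < τ / (1 + Real.exp C) := by positivity
  refine ⟨⟨hml, hmu⟩, ⟨huL, huU⟩, ⟨by linarith, hρU⟩, ⟨by linarith, by linarith⟩,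
    ⟨by linarith, by linarith⟩, ⟨by linarith, ?_⟩⟩
  nlinarith
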